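/- Lemma (paper Lemma 6.3, auxiliary torsion-control lemma). In the situation of the context, fix an integer n ≥ 0 and for each m set C_m := Fil_m M / (θ − n)(Fil_m M) (well defined since θ − n preserves Fil_m M). Then: (1) there is a left exact sequence 0 → {x ∈ Fil_n M : θ(x) = n·x} → gr_n M → C_{n−1}, where the first map is induced by the projection Fil_n M → gr_n M and the second by x ↦ class of (θ − n)(x); (2) for every integer m with p ∤ (n − m), the inclusion Fil_{m−1} M ⊆ Fil_m M induces an isomorphism C_{m−1} ≅ C_m; in particular C_{n−bp−1} = C_{n−bp−2} = … = C_{n−bp−p} for every b; (3) for every integer b ≥ 0 there is a right exact sequence C_{n−bp−p} → C_{n−bp} → gr_{n−bp} M / (bp)·gr_{n−bp} M → 0, the maps being induced by the inclusion of filtration steps and the projection to the graded piece. -/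

import Mathlib

/-!
Statement 5 (paper Lemma 6.3, auxiliary torsion-control lemma).

Context as in Statement 4: `R` a char-0 DVR with maximal ideal `(p)`, `M` finite free
of rank `d` with filtration `Fil` and operator `θ` as in the paper's integral filtered
Sen theory.  For a fixed `n` set `C_m := Fil_m M / (θ - n)(Fil_m M)` and
`gr_m M := Fil_m M / Fil_{m-1} M`.  The maps occurring in the exact sequences are
pinned down by their values on (classes of) elements.
-/

open Submodule

noncomputable section

namespace FilSen

variable {R : Type*} [CommRing R] {M : Type*} [AddCommGroup M] [Module R M]

/-- `gr_n M = Fil_n M / Fil_{n-1} M`. -/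
abbrev grQ (Fil : ℤ → Submodule R M) (n : ℤ) :=
  ↥(Fil n) ⧸ Submodule.comap (Fil n).subtype (Fil (n - 1))

/-- `C_m = Fil_m M / (θ - n)(Fil_m M)`. -/
abbrev CQ (Fil : ℤ → Submodule R M) (θ : M →ₗ[R] M) (n m : ℤ) :=
  ↥(Fil m) ⧸ Submodule.comap (Fil m).subtype
    (Submodule.map (θ - (n : R) • (LinearMap.id : M →ₗ[R] M)) (Fil m))

end FilSen

open FilSen


/-- An integer not divisible by `p` is a unit in a local ring where `p` is irreducible. -/
lemma FilSenAux.unit_of_not_dvd {R : Type*} [CommRing R] [IsLocalRing R]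
    (p : ℕ) [Fact p.Prime] (hp : Irreducible (p : R)) (c : ℤ) (hc : ¬ ((p:ℤ) ∣ c)) :
    IsUnit (c : R) := by
  have hd : ¬ (p ∣ c.natAbs) := by
    intro h
    exact hc (Int.dvd_natAbs.mp (by exact_mod_cast Int.natCast_dvd_natCast.mpr h))
  have hcop : IsCoprime (p:ℤ) c := by
    rw [Int.isCoprime_iff_gcd_eq_one, Int.gcd]
    simp only [Int.natAbs_natCast]
    exact (Nat.Prime.coprime_iff_not_dvd (Fact.out)).mpr hd
  obtain ⟨a, b, hab⟩ := hcop
  have hab' : (a : R) * (p : R) + (b : R) * (c : R) = 1 := by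
    have := congrArg (fun z : ℤ => (z : R)) hab
    push_cast at this
    simpa using this
  rcases IsLocalRing.isUnit_or_isUnit_of_add_one hab' with h | h
  · exact absurd (isUnit_of_mul_isUnit_right h) hp.not_isUnit
  · exact isUnit_of_mul_isUnit_right h

lemma FilSenAux.smul_unit_mem {R : Type*} [CommRing R] {M : Type*} [AddCommGroup M]
    [Module R M] (S : Submodule R M) (c : R) (hc : IsUnit c) (x : M) (hx : c • x ∈ S) :
    x ∈ S := by
  obtain ⟨u, rfl⟩ := hc
  simpa [smul_smul] using S.smul_mem (↑u⁻¹) hx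

theorem torsion_control_sequences
    {R : Type*} [CommRing R] [IsDomain R] [IsDiscreteValuationRing R] [CharZero R]
    (p : ℕ) [Fact p.Prime] (hp : Irreducible (p : R))
    {M : Type*} [AddCommGroup M] [Module R M] [Module.Free R M] [Module.Finite R M]
    (d : ℕ) (hd : 0 < d) (hrank : Module.finrank R M = d)
    (r : Fin d → ℕ) (hr : Monotone r)
    (Fil : ℤ → Submodule R M) (hmono : Monotone Fil)
    (hbot : ∀ n : ℤ, n < 0 → Fil n = ⊥)
    (htop : ∀ n : ℤ, ((Finset.univ.sup r : ℕ) : ℤ) ≤ n → Fil n = ⊤)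
    (θ : M →ₗ[R] M)
    (hstab : ∀ n : ℤ, ∀ x ∈ Fil n, θ x ∈ Fil n)
    (hGT : ∀ n : ℤ, ∀ x ∈ Fil n, θ x - (n : R) • x ∈ Fil (n - 1))
    (hchar : LinearMap.charpoly θ = ∏ i : Fin d, (Polynomial.X - Polynomial.C ((r i : R))))
    (hdiag : Polynomial.aeval θ (∏ v ∈ Finset.image r Finset.univ,
        (Polynomial.X - Polynomial.C ((v : R)))) = 0)
    (n : ℤ) (hn : 0 ≤ n) :
    -- (1) the sequence `0 → (Fil_n)^{θ = n} → gr_n M → C_{n-1}` is left exact, where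
    -- the first map is induced by the projection `Fil_n → gr_n` and the second map `g`
    -- sends the class of `x ∈ Fil_n` to the class of `(θ - n) x ∈ Fil_{n-1}`.
    (∀ g : grQ Fil n →ₗ[R] CQ Fil θ n (n - 1),
      (∀ x : ↥(Fil n),
        g (Submodule.Quotient.mk x)
          = Submodule.Quotient.mk
              (⟨θ (x : M) - (n : R) • (x : M), hGT n (x : M) x.2⟩ : ↥(Fil (n - 1)))) →
      Function.Injective
        ((Submodule.mkQ (Submodule.comap (Fil n).subtype (Fil (n - 1)))).comp
          (Submodule.subtype (Submodule.comap (Fil n).subtype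
            (LinearMap.ker (θ - (n : R) • (LinearMap.id : M →ₗ[R] M)))))) ∧
      LinearMap.range
        ((Submodule.mkQ (Submodule.comap (Fil n).subtype (Fil (n - 1)))).comp
          (Submodule.subtype (Submodule.comap (Fil n).subtype
            (LinearMap.ker (θ - (n : R) • (LinearMap.id : M →ₗ[R] M))))))
        = LinearMap.ker g) ∧
    -- (2) for every `m` with `p ∤ (n - m)`, the inclusion `Fil_{m-1} ⊆ Fil_m`
    -- induces an isomorphism `C_{m-1} ≅ C_m`
    (∀ m : ℤ, ¬ ((p : ℤ) ∣ (n - m)) →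
      ∀ ψ : CQ Fil θ n (m - 1) →ₗ[R] CQ Fil θ n m,
        (∀ x : ↥(Fil (m - 1)),
          ψ (Submodule.Quotient.mk x)
            = Submodule.Quotient.mk (Submodule.inclusion (hmono (by omega : m - 1 ≤ m)) x)) →
        Function.Bijective ψ) ∧
    -- (3) for every `b ≥ 0` there is a right exact sequence
    -- `C_{n-bp-p} → C_{n-bp} → gr_{n-bp} M / (bp)·gr_{n-bp} M → 0`, the maps being
    -- induced by the inclusion of filtration steps and the projection to the graded
    -- piece
    (∀ b : ℕ,
      ∀ α : CQ Fil θ n (n - ((b * p : ℕ) : ℤ) - (p : ℤ)) →ₗ[R] CQ Fil θ n (n - ((b * p : ℕ) : ℤ)),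
        (∀ x : ↥(Fil (n - ((b * p : ℕ) : ℤ) - (p : ℤ))),
          α (Submodule.Quotient.mk x)
            = Submodule.Quotient.mk
                (Submodule.inclusion
                  (hmono (by omega : n - ((b * p : ℕ) : ℤ) - (p : ℤ) ≤ n - ((b * p : ℕ) : ℤ))) x)) →
      ∀ β : CQ Fil θ n (n - ((b * p : ℕ) : ℤ)) →ₗ[R]
          (grQ Fil (n - ((b * p : ℕ) : ℤ)) ⧸
            LinearMap.range ((((b * p : ℕ) : R)) •
              (LinearMap.id : grQ Fil (n - ((b * p : ℕ) : ℤ)) →ₗ[R] grQ Fil (n - ((b * p : ℕ) : ℤ))))),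
        (∀ x : ↥(Fil (n - ((b * p : ℕ) : ℤ))),
          β (Submodule.Quotient.mk x)
            = Submodule.Quotient.mk
                ((Submodule.Quotient.mk x : grQ Fil (n - ((b * p : ℕ) : ℤ))))) →
        Function.Surjective β ∧ LinearMap.range α = LinearMap.ker β) := by
  set T : M →ₗ[R] M := θ - (n : R) • (LinearMap.id : M →ₗ[R] M) with hTdef
  have hTapp : ∀ x : M, T x = θ x - (n : R) • x := by
    intro x
    simp [hTdef, LinearMap.sub_apply]
  have hhalf : ∀ (m : ℤ) (x : M), ((n - m : ℤ) : R) • x = (θ x - (m : R) • x) - T x := by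
    intro m x
    have h : ((n - m : ℤ) : R) = (n : R) - (m : R) := by push_cast; ring
    rw [h, sub_smul, hTapp]
    abel
  -- descent: an eigenvector for the eigenvalue `n` lying in `Fil (n-1)` vanishes
  have vanish : ∀ (j : ℕ) (m : ℤ), m ≤ -1 + (j : ℤ) → m ≤ n - 1 → ∀ x ∈ Fil m,
      T x = 0 → x = 0 := by
    intro j
    induction j with
    | zero =>
      intro m hm _ x hx _
      rw [hbot m (by omega)] at hx
      simpa using hx
    | succ j ih =>
      intro m hm hmn x hx hθx
      by_cases hcase : m ≤ -1 + (j : ℤ)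
      · exact ih m hcase hmn x hx hθx
      · have h1 : θ x - (m : R) • x ∈ Fil (m - 1) := hGT m x hx
        have h2 : ((n - m : ℤ) : R) • x ∈ Fil (m - 1) := by
          rw [hhalf m x, hθx, sub_zero]
          exact h1
        have h3 : T (((n - m : ℤ) : R) • x) = 0 := by rw [map_smul, hθx, smul_zero]
        have h4 := ih (m - 1) (by omega) (by omega) _ h2 h3
        have hc : ((n - m : ℤ) : R) ≠ 0 := Int.cast_ne_zero.mpr (by omega)
        rcases smul_eq_zero.mp h4 with h | h
        · exact absurd h hc
        · exact h
  have vanish' : ∀ x ∈ Fil (n - 1), T x = 0 → x = 0 := fun x hx h =>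
    vanish n.toNat (n - 1) (by omega) (by omega) x hx h
  refine ⟨?_, ?_, ?_⟩
  · -- part (1)
    intro g hg
    constructor
    · -- injectivity
      intro a b hab
      simp only [LinearMap.comp_apply, Submodule.mkQ_apply, Submodule.subtype_apply] at hab
      have hab' := (Submodule.Quotient.eq _).mp hab
      rw [Submodule.mem_comap] at hab'
      simp only [Submodule.subtype_apply, AddSubgroupClass.coe_sub] at hab'
      have ha : T (((a : ↥(Fil n)) : M)) = 0 := by
        have := Submodule.mem_comap.mp a.2
        rwa [LinearMap.mem_ker] at this
      have hb : T (((b : ↥(Fil n)) : M)) = 0 := by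
        have := Submodule.mem_comap.mp b.2
        rwa [LinearMap.mem_ker] at this
      have hz : T (((a : ↥(Fil n)) : M) - ((b : ↥(Fil n)) : M)) = 0 := by
        rw [map_sub, ha, hb, sub_zero]
      have := vanish' _ hab' hz
      exact Subtype.ext (Subtype.ext (by rwa [sub_eq_zero] at this))
    · -- exactness
      ext c
      constructor
      · rintro ⟨z, rfl⟩
        rw [LinearMap.mem_ker]
        simp only [LinearMap.comp_apply, Submodule.mkQ_apply, Submodule.subtype_apply]
        rw [hg]
        have hz : θ ((z : ↥(Fil n)) : M) - (n : R) • ((z : ↥(Fil n)) : M) = 0 := by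
          rw [← hTapp]
          have := Submodule.mem_comap.mp z.2
          rwa [LinearMap.mem_ker] at this
        rw [Submodule.Quotient.mk_eq_zero, Submodule.mem_comap]
        simp only [Submodule.subtype_apply]
        rw [hz]
        exact zero_mem _
      · intro hc
        obtain ⟨x, rfl⟩ := Submodule.Quotient.mk_surjective _ c
        rw [LinearMap.mem_ker, hg x, Submodule.Quotient.mk_eq_zero, Submodule.mem_comap] at hc
        simp only [Submodule.subtype_apply] at hc
        obtain ⟨y, hy, hTy⟩ := Submodule.mem_map.mp hc
        have hzFil : (x : M) - y ∈ Fil n := sub_mem x.2 (hmono (by omega) hy)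
        have hzker : T ((x : M) - y) = 0 := by
          rw [map_sub, hTy, hTapp]
          abel
        refine ⟨⟨⟨(x : M) - y, hzFil⟩, ?_⟩, ?_⟩
        · rw [Submodule.mem_comap, LinearMap.mem_ker]
          exact hzker
        · simp only [LinearMap.comp_apply, Submodule.mkQ_apply, Submodule.subtype_apply]
          rw [Submodule.Quotient.eq, Submodule.mem_comap]
          simp only [Submodule.subtype_apply, AddSubgroupClass.coe_sub]
          have he : ((x : M) - y) - (x : M) = -y := by abel
          rw [he]
          exact neg_mem hy
  · -- part (2)
    intro m hdvd ψ hψ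
    have hunit : IsUnit ((n - m : ℤ) : R) := FilSenAux.unit_of_not_dvd p hp _ hdvd
    constructor
    · -- injectivity
      intro a b hab
      rw [← sub_eq_zero, ← map_sub] at hab
      rw [← sub_eq_zero]
      set c := a - b with hcdef
      clear_value c
      obtain ⟨x, rfl⟩ := Submodule.Quotient.mk_surjective _ c
      rw [hψ x, Submodule.Quotient.mk_eq_zero, Submodule.mem_comap] at hab
      simp only [Submodule.subtype_apply, Submodule.coe_inclusion] at hab
      obtain ⟨z, hz, hTz⟩ := Submodule.mem_map.mp hab
      have hzm : ((n - m : ℤ) : R) • z ∈ Fil (m - 1) := by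
        rw [hhalf m z]
        exact sub_mem (hGT m z hz) (hTz ▸ x.2)
      have hz1 : z ∈ Fil (m - 1) := FilSenAux.smul_unit_mem _ _ hunit _ hzm
      rw [Submodule.Quotient.mk_eq_zero, Submodule.mem_comap]
      simp only [Submodule.subtype_apply]
      exact ⟨z, hz1, hTz⟩
    · -- surjectivity
      intro c
      obtain ⟨x, rfl⟩ := Submodule.Quotient.mk_surjective _ c
      have hx : (x : M) ∈ Fil (m - 1) ⊔ Submodule.map T (Fil m) := by
        apply FilSenAux.smul_unit_mem _ _ hunit
        rw [hhalf m]
        exact sub_mem (Submodule.mem_sup_left (hGT m x x.2))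
          (Submodule.mem_sup_right (Submodule.mem_map_of_mem x.2))
      obtain ⟨y, hy, w, hw, hyw⟩ := Submodule.mem_sup.mp hx
      refine ⟨Submodule.Quotient.mk ⟨y, hy⟩, ?_⟩
      rw [hψ, Submodule.Quotient.eq, Submodule.mem_comap]
      simp only [Submodule.subtype_apply, AddSubgroupClass.coe_sub, Submodule.coe_inclusion]
      have he : y - (x : M) = -w := by rw [← hyw]; abel
      rw [he]
      exact neg_mem hw
  · -- part (3)
    intro b α hα β hβ
    have hppos : 0 < p := (Fact.out : p.Prime).pos
    set m : ℤ := n - ((b * p : ℕ) : ℤ) with hm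
    constructor
    · -- surjectivity of β
      intro c
      obtain ⟨gq, rfl⟩ := Submodule.Quotient.mk_surjective _ c
      obtain ⟨x, rfl⟩ := Submodule.Quotient.mk_surjective _ gq
      exact ⟨Submodule.Quotient.mk x, hβ x⟩
    · -- exactness
      ext c
      constructor
      · rintro ⟨a, rfl⟩
        obtain ⟨x, rfl⟩ := Submodule.Quotient.mk_surjective _ a
        rw [LinearMap.mem_ker, hα x, hβ]
        have hgr : (Submodule.Quotient.mk (Submodule.inclusion
            (hmono (by omega : m - (p : ℤ) ≤ m)) x) : grQ Fil m) = 0 := by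
          rw [Submodule.Quotient.mk_eq_zero, Submodule.mem_comap]
          simp only [Submodule.subtype_apply, Submodule.coe_inclusion]
          exact hmono (by omega) x.2
        rw [hgr]
        simp
      · intro hc
        obtain ⟨x, rfl⟩ := Submodule.Quotient.mk_surjective _ c
        rw [LinearMap.mem_ker, hβ, Submodule.Quotient.mk_eq_zero] at hc
        obtain ⟨gq, hgq⟩ := hc
        obtain ⟨z, rfl⟩ := Submodule.Quotient.mk_surjective _ gq
        simp only [LinearMap.smul_apply, LinearMap.id_apply] at hgq
        rw [← Submodule.Quotient.mk_smul] at hgq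
        have hdiff : (x : M) - ((b * p : ℕ) : R) • (z : M) ∈ Fil (m - 1) := by
          have h := (Submodule.Quotient.eq _).mp hgq
          rw [Submodule.mem_comap] at h
          simp only [Submodule.subtype_apply, AddSubgroupClass.coe_sub,
            SetLike.val_smul] at h
          simpa [neg_sub, hm] using neg_mem h
        -- the inductive descent within one period
        have hS : ∀ (k : ℕ), k < p → ∀ x' ∈ Fil (m - (p : ℤ) + (k : ℤ)),
            x' ∈ Fil (m - (p : ℤ)) ⊔ Submodule.map T (Fil m) := by
          intro k
          induction k with
          | zero =>
            intro _ x' hx'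
            exact Submodule.mem_sup_left (by simpa using hx')
          | succ k ih =>
            intro hk x' hx'
            have hcast2 : (((k : ℕ) + 1 : ℕ) : ℤ) = (k : ℤ) + 1 := by push_cast; ring
            rw [hcast2] at hx'
            have hndvd : ¬ ((p : ℤ) ∣ (n - (m - (p : ℤ) + ((k : ℤ) + 1)))) := by
              intro hdd
              have h1 : (p : ℤ) ∣ (((b * p : ℕ) : ℤ) + (p : ℤ)) := by
                push_cast
                exact dvd_add ⟨(b : ℤ), mul_comm _ _⟩ dvd_rfl
              have he : n - (m - (p : ℤ) + ((k : ℤ) + 1))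
                  = (((b * p : ℕ) : ℤ) + (p : ℤ)) - ((k : ℤ) + 1) := by
                rw [hm]; ring
              rw [he] at hdd
              have h2 : (p : ℤ) ∣ ((k : ℤ) + 1) := by
                have h3 := dvd_sub h1 hdd
                have he3 : (((b * p : ℕ) : ℤ) + (p : ℤ))
                    - ((((b * p : ℕ) : ℤ) + (p : ℤ)) - ((k : ℤ) + 1)) = (k : ℤ) + 1 := by ring
                rwa [he3] at h3
              have := Int.le_of_dvd (by omega) h2
              omega
            have hu := FilSenAux.unit_of_not_dvd p hp _ hndvd
            apply FilSenAux.smul_unit_mem _ _ hu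
            rw [hhalf]
            apply sub_mem
            · have h1 := hGT (m - (p : ℤ) + ((k : ℤ) + 1)) x' hx'
              have he2 : m - (p : ℤ) + ((k : ℤ) + 1) - 1 = m - (p : ℤ) + (k : ℤ) := by ring
              rw [he2] at h1
              exact ih (by omega) _ h1
            · exact Submodule.mem_sup_right
                (Submodule.map_mono (hmono (by omega)) (Submodule.mem_map_of_mem hx'))
        have hFm1 : Fil (m - 1) ≤ Fil (m - (p : ℤ)) ⊔ Submodule.map T (Fil m) := by
          intro v hv
          apply hS (p - 1) (by omega) v
          have he : m - (p : ℤ) + (((p - 1 : ℕ)) : ℤ) = m - 1 := by omega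
          rw [he]
          exact hv
        have hxS : (x : M) ∈ Fil (m - (p : ℤ)) ⊔ Submodule.map T (Fil m) := by
          have h1 := hFm1 hdiff
          have h2 : ((b * p : ℕ) : R) • (z : M) ∈ Fil (m - (p : ℤ)) ⊔ Submodule.map T (Fil m) := by
            have hcR : ((b * p : ℕ) : R) = ((n - m : ℤ) : R) := by
              rw [hm]; push_cast; ring
            rw [hcR, hhalf]
            exact sub_mem (hFm1 (hGT m (z : M) z.2))
              (Submodule.mem_sup_right (Submodule.mem_map_of_mem z.2))
          have := add_mem h1 h2
          simpa using this
        obtain ⟨y, hy, w, hw, hyw⟩ := Submodule.mem_sup.mp hxS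
        refine ⟨Submodule.Quotient.mk ⟨y, hy⟩, ?_⟩
        rw [hα, Submodule.Quotient.eq, Submodule.mem_comap]
        simp only [Submodule.subtype_apply, AddSubgroupClass.coe_sub, Submodule.coe_inclusion]
        have he : y - (x : M) = -w := by rw [← hyw]; abel
        rw [he]
        exact neg_mem hw
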